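/- Let M be a torsion-free R-module of countable rank that is the union of an ascending chain 0 = M_0 ≤ M_1 ≤ ... (indexed by ℕ) where each M_n is a direct sum of finite rank submodules and each M_n is relatively divisible in M_{n+1}. Suppose that for every finite subset S of M there exist an index n and a finite rank submodule C of M containing S such that C is a direct summand of M_m for all m ≥ n. Then M is a direct sum of finite rank submodules. -/

import Mathlib

open Cardinal

universe u v

variable {R : Type u} [CommRing R] [IsDomain R]
variable {M : Type v} [AddCommGroup M] [Module R M]

/-- `A` is a relatively divisible (RD) submodule of `M`. -/
def IsRD (A : Submodule R M) : Prop :=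
  ∀ (r : R) (m : M), r • m ∈ A → ∃ a ∈ A, r • a = r • m

/-- `A` is relatively divisible within the submodule `N` of `M`. -/
def IsRDWithin (A N : Submodule R M) : Prop :=
  A ≤ N ∧ ∀ (r : R) (m : M), m ∈ N → r • m ∈ A → ∃ a ∈ A, r • a = r • m

/-- `A` is an RD*-submodule of `M`: RD, and every finite rank submodule of `M ⧸ A`
has a countable rank preimage. -/
def IsRDStar (A : Submodule R M) : Prop :=
  IsRD A ∧ ∀ Q : Submodule R (M ⧸ A), Module.rank R ↥Q < ℵ₀ →
    ∃ C : Submodule R M, Module.rank R ↥C ≤ ℵ₀ ∧ C.map A.mkQ = Q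

/-- `A` is an RD*-submodule of the submodule `N` of `M`. -/
def IsRDStarWithin (A N : Submodule R M) : Prop :=
  IsRDWithin A N ∧ ∀ Q : Submodule R (M ⧸ A), Q ≤ N.map A.mkQ →
    Module.rank R ↥Q < ℵ₀ →
    ∃ C : Submodule R M, C ≤ N ∧ Module.rank R ↥C ≤ ℵ₀ ∧ C.map A.mkQ = Q

/-- `A` is a direct summand of `M`. -/
def IsSummand (A : Submodule R M) : Prop :=
  ∃ P : Submodule R M, A ⊓ P = ⊥ ∧ A ⊔ P = ⊤

/-- `A` is a direct summand of the submodule `N` of `M`. -/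
def IsSummandWithin (A N : Submodule R M) : Prop :=
  A ≤ N ∧ ∃ P ≤ N, A ⊓ P = ⊥ ∧ A ⊔ P = N

/-- A G*(ℵ₀)-family of RD-submodules of `M`. -/
def IsGStarFamily (𝒢 : Set (Submodule R M)) : Prop :=
  (∀ A ∈ 𝒢, IsRD A) ∧ (⊥ : Submodule R M) ∈ 𝒢 ∧ (⊤ : Submodule R M) ∈ 𝒢 ∧
  (∀ c ⊆ 𝒢, IsChain (· ≤ ·) c → c.Nonempty → sSup c ∈ 𝒢) ∧
  ∀ C ∈ 𝒢, ∀ X : Set M, X.Countable →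
    ∃ B ∈ 𝒢, C ≤ B ∧ X ⊆ ↑B ∧ Module.rank R ↥(B.map C.mkQ) ≤ ℵ₀

/-- A G*(ℵ₀)-family of RD-submodules of the submodule `N` of `M`. -/
def IsGStarFamilyWithin (𝒢 : Set (Submodule R M)) (N : Submodule R M) : Prop :=
  (∀ A ∈ 𝒢, IsRDWithin A N) ∧ (⊥ : Submodule R M) ∈ 𝒢 ∧ N ∈ 𝒢 ∧
  (∀ c ⊆ 𝒢, IsChain (· ≤ ·) c → c.Nonempty → sSup c ∈ 𝒢) ∧
  ∀ C ∈ 𝒢, ∀ X : Set M, X ⊆ ↑N → X.Countable →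
    ∃ B ∈ 𝒢, C ≤ B ∧ X ⊆ ↑B ∧ Module.rank R ↥(B.map C.mkQ) ≤ ℵ₀

/-- `A` is ultra-balanced in `M`: an RD-submodule that is a direct summand of every
RD-submodule `C` of `M` containing `A` with `C/A` of finite rank. -/
def IsUltraBalanced (A : Submodule R M) : Prop :=
  IsRD A ∧ ∀ C : Submodule R M, IsRD C → A ≤ C →
    Module.rank R ↥(C.map A.mkQ) < ℵ₀ →
    ∃ D ≤ C, A ⊓ D = ⊥ ∧ A ⊔ D = C

/-- `N` is a direct sum of submodules of countable rank. -/
def DSumCountableRank (R : Type u) [CommRing R] (N : Type v) [AddCommGroup N]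
    [Module R N] : Prop :=
  ∃ (ι : Type v) (f : ι → Submodule R N), iSupIndep f ∧
    iSup f = ⊤ ∧ ∀ i, Module.rank R ↥(f i) ≤ ℵ₀

/-- `N` is finitely decomposable: a direct sum of finite rank submodules. -/
def FinDecomp (R : Type u) [CommRing R] (N : Type v) [AddCommGroup N]
    [Module R N] : Prop :=
  ∃ (ι : Type v) (f : ι → Submodule R N), iSupIndep f ∧
    iSup f = ⊤ ∧ ∀ i, Module.rank R ↥(f i) < ℵ₀

/-- The smallest RD-submodule of `M` containing `Y`. -/
def rdClosure (Y : Set M) : Submodule R M :=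
  sInf {N : Submodule R M | IsRD N ∧ Y ⊆ ↑N}

/-- Auxiliary: a direct summand of `N` is closed under division by nonzero scalars,
relative to elements of `N`. -/
lemma mem_of_isSummandWithin [NoZeroSMulDivisors R M] {C N : Submodule R M}
    (h : IsSummandWithin C N) {r : R} (hr : r ≠ 0) {m : M} (hm : m ∈ N)
    (hrm : r • m ∈ C) : m ∈ C := by
  obtain ⟨hCN, P, hPN, hdisj, hsup⟩ := h
  have hmem : m ∈ C ⊔ P := hsup ▸ hm
  obtain ⟨c, hc, p, hp, rfl⟩ := Submodule.mem_sup.mp hmem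
  have hrp : r • p ∈ C ⊓ P := by
    refine ⟨?_, Submodule.smul_mem _ _ hp⟩
    have heq : r • p = r • (c + p) - r • c := by rw [smul_add]; abel
    rw [heq]
    exact Submodule.sub_mem _ hrm (Submodule.smul_mem _ _ hc)
  rw [hdisj, Submodule.mem_bot] at hrp
  rcases smul_eq_zero.mp hrp with h' | h'
  · exact absurd h' hr
  · simpa [h'] using hc

/-- Auxiliary: a finite rank submodule has a finite subset spanning it up to torsion. -/
lemma exists_finset_spanning {C : Submodule R M} (hC : Module.rank R ↥C < ℵ₀) :
    ∃ Y : Finset M, ↑Y ⊆ (C : Set M) ∧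
      ∀ c ∈ C, ∃ r : R, r ≠ 0 ∧ r • c ∈ Submodule.span R (Y : Set M) := by
  classical
  obtain ⟨I, hI, hImax⟩ := exists_maximal_linearIndepOn R (fun c : ↥C => (c : M))
  have hIind : LinearIndependent R (fun x : I => (x : ↥C)) :=
    LinearIndependent.of_comp C.subtype hI
  have hIfin : I.Finite :=
    Cardinal.lt_aleph0_iff_set_finite.mp (lt_of_le_of_lt hIind.cardinal_le_rank hC)
  have hIfin' : ((fun c : ↥C => (c : M)) '' I).Finite := hIfin.image _
  refine ⟨hIfin'.toFinset, ?_, ?_⟩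
  · intro y hy
    rw [Set.Finite.coe_toFinset] at hy
    obtain ⟨c, _, rfl⟩ := hy
    exact c.2
  · intro c hc
    by_cases hmem : (⟨c, hc⟩ : ↥C) ∈ I
    · refine ⟨1, one_ne_zero, ?_⟩
      rw [one_smul]
      apply Submodule.subset_span
      rw [Set.Finite.coe_toFinset]
      exact ⟨⟨c, hc⟩, hmem, rfl⟩
    · obtain ⟨a, ha, haspan⟩ := hImax _ hmem
      refine ⟨a, ha, ?_⟩
      rwa [Set.Finite.coe_toFinset]

/-- (Lemma cfd) A countable rank union of a chain of finitely decomposable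
modules, each RD in the next, satisfying condition (*), is finitely decomposable. -/
theorem finDecomp_of_chain [NoZeroSMulDivisors R M] (hMrank : Module.rank R M ≤ ℵ₀)
    (Mseq : ℕ → Submodule R M) (h0 : Mseq 0 = ⊥) (hmono : Monotone Mseq)
    (hunion : ⨆ n, Mseq n = ⊤)
    (hfd : ∀ n, FinDecomp R ↥(Mseq n))
    (hRD : ∀ n, IsRDWithin (Mseq n) (Mseq (n + 1)))
    (hstar : ∀ S : Finset M, ∃ (n : ℕ) (C : Submodule R M),
      ↑S ⊆ (C : Set M) ∧ Module.rank R ↥C < ℵ₀ ∧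
      ∀ m, n ≤ m → IsSummandWithin C (Mseq m)) :
    FinDecomp R M := by
  classical
  -- every element lies in some `Mseq n`
  have hmem : ∀ m : M, ∃ n, m ∈ Mseq n := by
    intro m
    have h1 : m ∈ (⨆ n, Mseq n) := hunion.symm ▸ Submodule.mem_top
    exact (Submodule.mem_iSup_of_chain ⟨Mseq, hmono⟩ m).mp h1
  -- a countable maximal independent family
  obtain ⟨I, hI, hImax⟩ := exists_maximal_linearIndepOn R (id : M → M)
  have hIc : I.Countable := by
    have h1 : #↥I ≤ ℵ₀ := le_trans (LinearIndependent.cardinal_le_rank hI) hMrank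
    exact Set.countable_coe_iff.mp (Cardinal.mk_le_aleph0_iff.mp h1)
  obtain ⟨x, hx⟩ := (hIc.insert 0).exists_eq_range (Set.insert_nonempty _ _)
  -- approximation: every element has a nonzero multiple in a finite initial span
  have happrox : ∀ m : M, ∃ (j : ℕ) (r : R), r ≠ 0 ∧
      r • m ∈ Submodule.span R (x '' Set.Iic j) := by
    intro m
    by_cases hm : m ∈ I
    · have hmr : m ∈ Set.range x := hx ▸ Set.mem_insert_of_mem _ hm
      obtain ⟨j, rfl⟩ := hmr
      refine ⟨j, 1, one_ne_zero, ?_⟩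
      rw [one_smul]
      exact Submodule.subset_span ⟨j, Set.mem_Iic.mpr le_rfl, rfl⟩
    · obtain ⟨a, ha, haspan⟩ := hImax m hm
      rw [Set.image_id] at haspan
      set P : ℕ →o Submodule R M :=
        ⟨fun j => Submodule.span R (x '' Set.Iic j), fun a b hab =>
          Submodule.span_mono (Set.image_mono (Set.Iic_subset_Iic.mpr hab))⟩ with hP
      have hIsub : Submodule.span R I ≤ ⨆ j, P j := by
        rw [Submodule.span_le]
        intro y hy
        have hyr : y ∈ Set.range x := hx ▸ Set.mem_insert_of_mem _ hy
        obtain ⟨j, rfl⟩ := hyr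
        exact (Submodule.mem_iSup_of_chain P _).mpr
          ⟨j, Submodule.subset_span ⟨j, Set.mem_Iic.mpr le_rfl, rfl⟩⟩
      obtain ⟨j, hj⟩ := (Submodule.mem_iSup_of_chain P _).mp (hIsub haspan)
      exact ⟨j, a, ha, hj⟩
  -- the step: enlarge a finite rank submodule to a finite rank eventual summand
  have hstep : ∀ C : Submodule R M, Module.rank R ↥C < ℵ₀ → ∀ z : M,
      ∃ (C' : Submodule R M) (n' : ℕ), C ≤ C' ∧ z ∈ C' ∧
        Module.rank R ↥C' < ℵ₀ ∧ ∀ m, n' ≤ m → IsSummandWithin C' (Mseq m) := by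
    intro C hC z
    obtain ⟨Y, hYC, hYspan⟩ := exists_finset_spanning hC
    obtain ⟨n', C', hSC, hC'rank, hsumm⟩ := hstar (insert z Y)
    refine ⟨C', n', ?_, ?_, hC'rank, hsumm⟩
    · intro c hc
      obtain ⟨r, hr, hrc⟩ := hYspan c hc
      have hspan : Submodule.span R (Y : Set M) ≤ C' := by
        rw [Submodule.span_le]
        intro y hy
        exact hSC (by simpa using Or.inr hy)
      obtain ⟨n0, hn0⟩ := hmem c
      exact mem_of_isSummandWithin (hsumm _ (le_max_left n' n0)) hr
        (hmono (le_max_right n' n0) hn0) (hspan hrc)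
    · exact hSC (by simp)
  -- build the increasing chain of eventual summands
  let T := {C : Submodule R M // Module.rank R ↥C < ℵ₀ ∧
    ∃ n, ∀ m, n ≤ m → IsSummandWithin C (Mseq m)}
  have hT0 : T := by
    choose n C h1 h2 h3 using hstar ∅
    exact ⟨C, h2, n, h3⟩
  have hstepT : ∀ (c : T) (z : M), ∃ c' : T, c.1 ≤ c'.1 ∧ z ∈ c'.1 := by
    rintro ⟨C, hC, _⟩ z
    obtain ⟨C', n', h1, h2, h3, h4⟩ := hstep C hC z
    exact ⟨⟨C', h3, n', h4⟩, h1, h2⟩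
  choose F hF1 hF2 using hstepT
  let gT : ℕ → T := fun k => Nat.rec (motive := fun _ => T) hT0 (fun k c => F c (x k)) k
  set g : ℕ → Submodule R M := fun k => (gT k).1 with hgdef
  have hgmono : Monotone g := monotone_nat_of_le_succ (fun k => hF1 (gT k) (x k))
  have hxg : ∀ k, x k ∈ g (k + 1) := fun k => hF2 (gT k) (x k)
  have hgrank : ∀ k, Module.rank R ↥(g k) < ℵ₀ := fun k => (gT k).2.1
  have hgsum : ∀ k, ∃ n, ∀ m, n ≤ m → IsSummandWithin (g k) (Mseq m) :=
    fun k => (gT k).2.2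
  have hgtop : ⨆ k, g k = ⊤ := by
    rw [eq_top_iff]
    intro m _
    obtain ⟨j, r, hr, hrm⟩ := happrox m
    have hspan : Submodule.span R (x '' Set.Iic j) ≤ g (j + 1) := by
      rw [Submodule.span_le]
      rintro _ ⟨i, hi, rfl⟩
      exact hgmono (Nat.succ_le_succ hi) (hxg i)
    obtain ⟨n1, hn1⟩ := hgsum (j + 1)
    obtain ⟨n0, hn0⟩ := hmem m
    have hmem' : m ∈ g (j + 1) :=
      mem_of_isSummandWithin (hn1 _ (le_max_left n1 n0)) hr
        (hmono (le_max_right n1 n0) hn0) (hspan hrm)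
    exact (Submodule.mem_iSup_of_chain ⟨g, hgmono⟩ m).mpr ⟨j + 1, hmem'⟩
  -- complements of successive terms
  have hcompl : ∀ k, ∃ D : Submodule R M,
      D ≤ g (k + 1) ∧ g k ⊓ D = ⊥ ∧ g k ⊔ D = g (k + 1) := by
    intro k
    obtain ⟨n1, h1⟩ := hgsum k
    obtain ⟨n2, h2⟩ := hgsum (k + 1)
    obtain ⟨hle1, P, hPle, hdisj, hsup⟩ := h1 (max n1 n2) (le_max_left _ _)
    have hle2 : g (k + 1) ≤ Mseq (max n1 n2) := (h2 _ (le_max_right _ _)).1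
    refine ⟨P ⊓ g (k + 1), inf_le_right, ?_, ?_⟩
    · rw [← le_bot_iff, ← hdisj]
      exact le_inf inf_le_left (le_trans inf_le_right inf_le_left)
    · have hmod := sup_inf_assoc_of_le P (hgmono (Nat.le_succ k) : g k ≤ g (k + 1))
      rw [← hmod, hsup, inf_eq_right.mpr hle2]
  choose D hD1 hD2 hD3 using hcompl
  let f : ℕ → Submodule R M := fun k => Nat.rec (motive := fun _ => Submodule R M) (g 0) (fun k _ => D k) k
  have hf0 : f 0 = g 0 := rfl
  have hfs : ∀ k, f (k + 1) = D k := fun k => rfl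
  have hfg : ∀ k, f k ≤ g k := by
    intro k
    cases k with
    | zero => exact le_rfl
    | succ k => exact hD1 k
  have hfgk : ∀ j k, j ≤ k → f j ≤ g k := fun j k h => (hfg j).trans (hgmono h)
  have hfbot : ∀ k, f (k + 1) ⊓ g k = ⊥ := by
    intro k
    rw [hfs, inf_comm, hD2]
  -- the union is everything
  have hgle : ∀ k, g k ≤ ⨆ j, f j := by
    intro k
    induction k with
    | zero => exact le_iSup f 0
    | succ k ih =>
      rw [← hD3 k]
      exact sup_le ih (le_trans (le_of_eq (hfs k).symm) (le_iSup f (k + 1)))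
  have hftop : ⨆ j, f j = ⊤ := top_unique (hgtop ▸ iSup_le hgle)
  -- independence
  have hindep : iSupIndep f := by
    intro i
    set E : ℕ →o Submodule R M :=
      ⟨fun N => ⨆ j, ⨆ (_ : j ≤ N ∧ j ≠ i), f j, by
        intro a b hab
        exact iSup₂_mono' fun j hj => ⟨j, ⟨hj.1.trans hab, hj.2⟩, le_rfl⟩⟩ with hE
    have hEg : ∀ N, E N ≤ g N :=
      fun N => iSup₂_le fun j hj => hfgk j N hj.1
    have hflt : ∀ N, N + 1 ≤ i → f i ⊓ E N = ⊥ := by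
      intro N hNi
      obtain ⟨k, rfl⟩ : ∃ k, i = k + 1 := ⟨i - 1, by omega⟩
      rw [← le_bot_iff, ← hfbot k]
      exact inf_le_inf_left _ ((hEg N).trans (hgmono (by omega)))
    have hEbot : ∀ N, f i ⊓ E N = ⊥ := by
      intro N
      induction N with
      | zero =>
        rcases Nat.eq_zero_or_pos i with hi | hi
        · subst hi
          have hE0 : E 0 ≤ ⊥ := iSup₂_le fun j hj => absurd (Nat.le_zero.mp hj.1) hj.2
          rw [← le_bot_iff]
          exact le_trans inf_le_right hE0
        · exact hflt 0 hi
      | succ N ih =>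
        rcases lt_trichotomy (N + 1) i with hlt | heq | hgt
        · exact hflt (N + 1) hlt
        · have hEeq : E (N + 1) ≤ E N := by
            refine iSup₂_le fun j hj => ?_
            have hjN : j ≤ N := by omega
            exact le_iSup₂_of_le j ⟨hjN, hj.2⟩ le_rfl
          rw [← le_bot_iff, ← ih]
          exact inf_le_inf_left _ hEeq
        · have hiN : i ≤ N := by omega
          have hEsplit : E (N + 1) ≤ E N ⊔ f (N + 1) := by
            refine iSup₂_le fun j hj => ?_
            by_cases hjN : j ≤ N
            · exact le_trans (le_iSup₂_of_le j ⟨hjN, hj.2⟩ le_rfl) le_sup_left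
            · have : j = N + 1 := by omega
              subst this
              exact le_sup_right
          rw [← le_bot_iff]
          intro y hy
          have hy1 : y ∈ f i := hy.1
          have hy2 : y ∈ E N ⊔ f (N + 1) := hEsplit hy.2
          obtain ⟨e, he, d, hd, rfl⟩ := Submodule.mem_sup.mp hy2
          have hdg : d ∈ g N := by
            have h1 : e + d ∈ g N := hfgk i N hiN hy1
            have h2 : e ∈ g N := hEg N he
            have : d = (e + d) - e := by abel
            rw [this]
            exact Submodule.sub_mem _ h1 h2
          have hd0 : d = 0 := by
            have : d ∈ f (N + 1) ⊓ g N := ⟨hd, hdg⟩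
            rwa [hfbot, Submodule.mem_bot] at this
          subst hd0
          have : e + 0 ∈ f i ⊓ E N := ⟨hy1, by simpa using he⟩
          rwa [ih] at this
    rw [disjoint_iff]
    rw [← le_bot_iff]
    intro y hy
    have hy1 : y ∈ f i := hy.1
    have hy2 : y ∈ ⨆ j, ⨆ (_ : j ≠ i), f j := hy.2
    have hsub : (⨆ j, ⨆ (_ : j ≠ i), f j) ≤ ⨆ N, E N :=
      iSup₂_le fun j hj =>
        le_trans (le_iSup₂_of_le j ⟨le_rfl, hj⟩ le_rfl) (le_iSup E j)
    obtain ⟨N, hN⟩ := (Submodule.mem_iSup_of_chain E y).mp (hsub hy2)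
    have : y ∈ f i ⊓ E N := ⟨hy1, hN⟩
    rwa [hEbot, Submodule.mem_bot] at this
  -- ranks
  have hfrank : ∀ k, Module.rank R ↥(f k) < ℵ₀ := by
    intro k
    exact lt_of_le_of_lt (Submodule.rank_mono (s := f k) (t := g k) (hfg k)) (hgrank k)
  -- assemble, lifting the index type to `Type v`
  refine ⟨ULift.{v} ℕ, fun i => f i.down, ?_, ?_, fun i => hfrank i.down⟩
  · exact hindep.comp (fun a b h => by cases a; cases b; simpa using h)
  · rw [← hftop]
    exact le_antisymm (iSup_le fun i => le_iSup f i.down)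
      (iSup_le fun k => le_iSup (fun i : ULift.{v} ℕ => f i.down) ⟨k⟩)
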